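/- If τ covers σ in the noncrossing partition lattice NC_n, then the permutation π(σ)⁻¹π(τ) is a transposition; consequently, for any saturated chain σ = σ_0 ⋖ σ_1 ⋖ ⋯ ⋖ σ_k = τ in NC_n, each label π(σ_{i−1})⁻¹π(σ_i) is a transposition and the product of these labels in order equals π(σ)⁻¹π(τ). -/

import Mathlib

/-- A partition of `[n]` (encoded as an equivalence relation / setoid on `Fin n`)
is *noncrossing* if there are no elements `a < b < c < d` with `a` and `c` in one
block and `b` and `d` in a different block. -/
def IsNoncrossing {n : ℕ} (σ : Setoid (Fin n)) : Prop :=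
  ∀ a b c d : Fin n, a < b → b < c → c < d → σ a c → σ b d → σ a b

/-- The noncrossing partition lattice `NC_n`, ordered by refinement. -/
abbrev NC (n : ℕ) := {σ : Setoid (Fin n) // IsNoncrossing σ}

/-- `p` is the permutation `π(σ)` associated to the partition `σ`: each block of `σ`
is a cycle of `p`, cycled in increasing order. -/
def IsPiPerm {n : ℕ} (σ : Setoid (Fin n)) (p : Equiv.Perm (Fin n)) : Prop :=
  ∀ x : Fin n,
    σ x (p x) ∧
    ((∃ y, σ x y ∧ x < y) → (x < p x ∧ ∀ y, σ x y → x < y → p x ≤ y)) ∧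
    ((∀ y, σ x y → y ≤ x) → ∀ y, σ x y → p x ≤ y)


section helpers
variable {n : ℕ}

lemma myExistsMin (S : Set (Fin n)) (h : S.Nonempty) : ∃ j, j ∈ S ∧ ∀ z ∈ S, j ≤ z := by
  classical
  obtain ⟨x, hx⟩ := h
  obtain ⟨j, hj, hmin⟩ := Finset.exists_min_image (Finset.univ.filter (· ∈ S)) id
    ⟨x, by simp [hx]⟩
  exact ⟨j, by simpa using hj, fun z hz => hmin z (by simp [hz])⟩

lemma myExistsMax (S : Set (Fin n)) (h : S.Nonempty) : ∃ j, j ∈ S ∧ ∀ z ∈ S, z ≤ j := by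
  classical
  obtain ⟨x, hx⟩ := h
  obtain ⟨j, hj, hmax⟩ := Finset.exists_max_image (Finset.univ.filter (· ∈ S)) id
    ⟨x, by simp [hx]⟩
  exact ⟨j, by simpa using hj, fun z hz => hmax z (by simp [hz])⟩

lemma pi_apply_eq {σ τ : Setoid (Fin n)} {p q : Equiv.Perm (Fin n)}
    (hp : IsPiPerm σ p) (hq : IsPiPerm τ q) (x : Fin n)
    (hcl : ∀ y, σ x y ↔ τ x y) : p x = q x := by
  obtain ⟨h1, h2, h3⟩ := hp x
  obtain ⟨k1, k2, k3⟩ := hq x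
  by_cases hu : ∃ y, σ x y ∧ x < y
  · obtain ⟨hlt, hmin⟩ := h2 hu
    obtain ⟨klt, kmin⟩ := k2 (hu.imp fun y hy => ⟨(hcl y).1 hy.1, hy.2⟩)
    exact le_antisymm (hmin _ ((hcl _).2 k1) klt) (kmin _ ((hcl _).1 h1) hlt)
  · push_neg at hu
    have hu' : ∀ y, σ x y → y ≤ x := hu
    have ku' : ∀ y, τ x y → y ≤ x := fun y hy => hu y ((hcl y).2 hy)
    exact le_antisymm (h3 hu' _ ((hcl _).2 k1)) (k3 ku' _ ((hcl _).1 h1))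

lemma pi_next {σ : Setoid (Fin n)} {p : Equiv.Perm (Fin n)} (hp : IsPiPerm σ p)
    {x z : Fin n} (hz : σ x z) (hlt : x < z)
    (hmin : ∀ y, σ x y → x < y → z ≤ y) : p x = z := by
  obtain ⟨h1, h2, _⟩ := hp x
  obtain ⟨hlt', hm'⟩ := h2 ⟨z, hz, hlt⟩
  exact le_antisymm (hm' z hz hlt) (hmin _ h1 hlt')

lemma pi_wrap {σ : Setoid (Fin n)} {p : Equiv.Perm (Fin n)} (hp : IsPiPerm σ p)
    {x z : Fin n} (hz : σ x z) (htop : ∀ y, σ x y → y ≤ x)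
    (hmin : ∀ y, σ x y → z ≤ y) : p x = z :=
  le_antisymm ((hp x).2.2 htop z hz) (hmin _ (hp x).1)

end helpers
section merge
variable {n : ℕ}

/-- merge the σ-classes of j and m -/
def mergeSetoid (σ : Setoid (Fin n)) (j m : Fin n) : Setoid (Fin n) where
  r x y := σ x y ∨ ((σ j x ∨ σ m x) ∧ (σ j y ∨ σ m y))
  iseqv := by
    refine ⟨fun x => Or.inl (σ.refl x), ?_, ?_⟩
    · rintro x y (h | ⟨hx, hy⟩)
      · exact Or.inl (σ.symm h)
      · exact Or.inr ⟨hy, hx⟩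
    · rintro x y z (hxy | ⟨hx, hy⟩) (hyz | ⟨hy', hz⟩)
      · exact Or.inl (σ.trans hxy hyz)
      · exact Or.inr ⟨hy'.imp (fun h => σ.trans h (σ.symm hxy)) (fun h => σ.trans h (σ.symm hxy)), hz⟩
      · exact Or.inr ⟨hx, hy.imp (fun h => σ.trans h hyz) (fun h => σ.trans h hyz)⟩
      · exact Or.inr ⟨hx, hz⟩

lemma mergeSetoid_r (σ : Setoid (Fin n)) (j m x y : Fin n) :
    (mergeSetoid σ j m) x y ↔ (σ x y ∨ ((σ j x ∨ σ m x) ∧ (σ j y ∨ σ m y))) := Iff.rfl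

end merge
section main
variable {n : ℕ}

lemma merge_noncrossing {σ τ : Setoid (Fin n)} (hσ : IsNoncrossing σ) (hτ : IsNoncrossing τ)
    (hle : ∀ x y, σ x y → τ x y) {j m : Fin n}
    (hjm : τ j m) (hjmin : ∀ z, τ j z → j ≤ z) (hm1 : ¬σ j m)
    (hmmin : ∀ z, τ j z → ¬σ j z → m ≤ z) :
    IsNoncrossing (mergeSetoid σ j m) := by
  have hjltm : j < m := lt_of_le_of_ne (hjmin m hjm) (fun e => hm1 (by rw [e]))
  have hTj : ∀ x, σ j x → τ j x := fun x hx => hle j x hx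
  have hTm : ∀ x, σ m x → τ j x := fun x hx => τ.iseqv.trans hjm (hle m x hx)
  have hTD : ∀ x, (σ j x ∨ σ m x) → τ j x := fun x hx => hx.elim (hTj x) (hTm x)
  have hCge : ∀ c, σ m c → m ≤ c := fun c hc =>
    hmmin c (hTm c hc) (fun hjc => hm1 (σ.iseqv.trans hjc (σ.iseqv.symm hc)))
  intro a b c d hab hbc hcd h13 h24
  rcases h13 with h13 | ⟨hA, hC⟩
  · rcases h24 with h24 | ⟨hB, hD⟩
    · exact Or.inl (hσ a b c d hab hbc hcd h13 h24)
    · -- case 3 : σ a c, b d ∈ D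
      have hτbd : τ b d := τ.iseqv.trans (τ.iseqv.symm (hTD b hB)) (hTD d hD)
      have hτab : τ a b := hτ a b c d hab hbc hcd (hle a c h13) hτbd
      have hτja : τ j a := τ.iseqv.trans (hTD b hB) (τ.iseqv.symm hτab)
      by_cases hja : σ j a
      · exact Or.inr ⟨Or.inl hja, hB⟩
      have hma : m ≤ a := hmmin a hτja hja
      rcases eq_or_lt_of_le hma with he | hlt
      · exact Or.inr ⟨Or.inr (by rw [← he]), hB⟩
      rcases hB with hb | hb
      · exact absurd (hσ j a b c (lt_trans hjltm hlt) hab hbc hb h13) hja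
      · exact Or.inr ⟨Or.inr (hσ m a b c hlt hab hbc hb h13), Or.inr hb⟩
  · rcases h24 with h24 | ⟨hB, hD⟩
    · -- case 2 : a c ∈ D, σ b d
      by_cases hac : σ a c
      · exact Or.inl (hσ a b c d hab hbc hcd hac h24)
      by_cases hDb : (σ j b ∨ σ m b)
      · exact Or.inr ⟨hA, hDb⟩
      push_neg at hDb
      rcases hA with ha | ha
      · -- a ∈ B hence c ∈ C
        have hc' : σ m c := by
          rcases hC with h | h
          · exact absurd (σ.iseqv.trans (σ.iseqv.symm ha) h) hac
          · exact h
        have hτac : τ a c := τ.iseqv.trans (τ.iseqv.symm (hTj a ha)) (hTm c hc')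
        have hτab : τ a b := hτ a b c d hab hbc hcd hτac (hle b d h24)
        have hτjb : τ j b := τ.iseqv.trans (hTj a ha) hτab
        have hmb : m < b := lt_of_le_of_ne (hmmin b hτjb hDb.1)
          (fun e => hDb.2 (by rw [← e]))
        exact absurd (hσ m b c d hmb hbc hcd hc' h24) hDb.2
      · -- a ∈ C hence c ∈ B
        have hc' : σ j c := by
          rcases hC with h | h
          · exact h
          · exact absurd (σ.iseqv.trans (σ.iseqv.symm ha) h) hac
        have hjb : j < b := lt_of_lt_of_le hjltm (le_trans (hCge a ha) (le_of_lt hab))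
        exact absurd (hσ j b c d hjb hbc hcd hc' h24) hDb.1
    · exact Or.inr ⟨hA, hB⟩

end main
section cover
variable {n : ℕ}

lemma cover_swap (σ τ : NC n) (h : σ ⋖ τ) (p q : Equiv.Perm (Fin n))
    (hp : IsPiPerm σ.val p) (hq : IsPiPerm τ.val q) : (p⁻¹ * q).IsSwap := by
  classical
  have hle : ∀ x y, σ.val x y → τ.val x y := by
    have := h.1.le
    intro x y hxy
    exact Setoid.le_def.1 this hxy
  -- find a pair related in τ but not σ
  have hne : σ.val ≠ τ.val := fun e => h.1.ne (Subtype.ext e)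
  have hex : ∃ x y, τ.val x y ∧ ¬σ.val x y := by
    by_contra hc
    push_neg at hc
    exact hne (Setoid.ext fun a b => ⟨hle a b, hc a b⟩)
  obtain ⟨x0, y0, hτxy, hσxy⟩ := hex
  -- j = min of the τ-class of x0
  obtain ⟨j, hjT, hjmin0⟩ := myExistsMin {z | τ.val x0 z} ⟨x0, τ.val.iseqv.refl x0⟩
  have hτjx0 : τ.val j x0 := τ.val.iseqv.symm hjT
  have hjmin : ∀ z, τ.val j z → j ≤ z := fun z hz => hjmin0 z (τ.val.iseqv.trans hjT hz)
  -- m = min of the elements of the class not σ-related to j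
  have hmex : ∃ z, (τ.val j z ∧ ¬σ.val j z) := by
    by_cases h1 : σ.val j x0
    · refine ⟨y0, τ.val.iseqv.trans hτjx0 hτxy, fun h2 => ?_⟩
      exact hσxy (σ.val.iseqv.trans (σ.val.iseqv.symm h1) h2)
    · exact ⟨x0, hτjx0, h1⟩
  obtain ⟨m, ⟨hτjm, hm1⟩, hmmin0⟩ := myExistsMin {z | τ.val j z ∧ ¬σ.val j z} hmex
  have hmmin : ∀ z, τ.val j z → ¬σ.val j z → m ≤ z := fun z h1 h2 => hmmin0 z ⟨h1, h2⟩
  -- basic facts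
  have hjltm : j < m := lt_of_le_of_ne (hjmin m hτjm) (fun e => hm1 (by rw [e]))
  have hTj : ∀ x, σ.val j x → τ.val j x := fun x hx => hle j x hx
  have hTm : ∀ x, σ.val m x → τ.val j x := fun x hx => τ.val.iseqv.trans hτjm (hle m x hx)
  have hdisj : ∀ x, σ.val j x → σ.val m x → False := fun x h1 h2 =>
    hm1 (σ.val.iseqv.trans h1 (σ.val.iseqv.symm h2))
  have hCge : ∀ c, σ.val m c → m ≤ c := fun c hc =>
    hmmin c (hTm c hc) (fun hjc => hdisj c hjc hc)
  have hBge : ∀ b, σ.val j b → j ≤ b := fun b hb => hjmin b (hTj b hb)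
  have hCltB : ∀ c b0, σ.val m c → σ.val j b0 → m < b0 → c < b0 := by
    intro c b0 hc hb0 hmb
    by_contra hcon
    push_neg at hcon
    rcases eq_or_lt_of_le hcon with he | hlt
    · exact hdisj c (by rw [he] at hb0; exact hb0) hc
    · exact hm1 (σ.2 j m b0 c hjltm hmb hlt hb0 hc)
  -- the merged partition is noncrossing, hence equals τ by the covering property
  have hρNC : IsNoncrossing (mergeSetoid σ.val j m) :=
    merge_noncrossing σ.2 τ.2 hle hτjm hjmin hm1 hmmin
  have hσρ : (σ : NC n) < ⟨mergeSetoid σ.val j m, hρNC⟩ := by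
    refine lt_of_le_of_ne ?_ ?_
    · exact Subtype.coe_le_coe.1 (Setoid.le_def.2 fun {x y} hxy => Or.inl hxy)
    · intro e
      have hval : σ.val = mergeSetoid σ.val j m := congrArg Subtype.val e
      have hjm' : (mergeSetoid σ.val j m) j m :=
        Or.inr ⟨Or.inl (σ.val.iseqv.refl j), Or.inr (σ.val.iseqv.refl m)⟩
      rw [← hval] at hjm'
      exact hm1 hjm'
  have hρτ : (⟨mergeSetoid σ.val j m, hρNC⟩ : NC n) ≤ τ := by
    refine Subtype.coe_le_coe.1 (Setoid.le_def.2 ?_)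
    rintro x y (hxy | ⟨hx, hy⟩)
    · exact hle x y hxy
    · exact τ.val.iseqv.trans (τ.val.iseqv.symm (hx.elim (hTj x) (hTm x))) (hy.elim (hTj y) (hTm y))
  have heq : (⟨mergeSetoid σ.val j m, hρNC⟩ : NC n) = τ := by
    by_contra hne'
    exact h.2 hσρ (lt_of_le_of_ne hρτ hne')
  have hτr : ∀ x y, τ.val x y ↔ (σ.val x y ∨ ((σ.val j x ∨ σ.val m x) ∧ (σ.val j y ∨ σ.val m y))) := by
    intro x y
    rw [← heq]
    exact Iff.rfl
  -- u = max of class of m, v = max of {z ∈ class of j | z < m}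
  obtain ⟨u, hu, humax0⟩ := myExistsMax {z | σ.val m z} ⟨m, σ.val.iseqv.refl m⟩
  have humax : ∀ z, σ.val m z → z ≤ u := fun z hz => humax0 z hz
  obtain ⟨v, ⟨hvB, hvm⟩, hvmax0⟩ := myExistsMax {z | σ.val j z ∧ z < m} ⟨j, σ.val.iseqv.refl j, hjltm⟩
  have hvmax : ∀ z, σ.val j z → z < m → z ≤ v := fun z h1 h2 => hvmax0 z ⟨h1, h2⟩
  have hmleu : m ≤ u := hCge u hu
  have hvltu : v < u := lt_of_lt_of_le hvm hmleu
  -- q v = m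
  have hqv : q v = m := by
    refine pi_next hq ((hτr v m).2 (Or.inr ⟨Or.inl hvB, Or.inr (σ.val.iseqv.refl m)⟩)) hvm ?_
    intro y hy hvy
    rcases (hτr v y).1 hy with hσvy | ⟨_, hyD⟩
    · have hjy : σ.val j y := σ.val.iseqv.trans hvB hσvy
      by_contra hc
      push_neg at hc
      exact absurd (hvmax y hjy hc) (not_le.2 hvy)
    · rcases hyD with hy' | hy'
      · by_contra hc
        push_neg at hc
        exact absurd (hvmax y hy' hc) (not_le.2 hvy)
      · exact hCge y hy'
  -- p u = m
  have hpu : p u = m := by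
    refine pi_wrap hp (σ.val.iseqv.symm hu) ?_ ?_
    · exact fun y hy => humax y (σ.val.iseqv.trans hu hy)
    · exact fun y hy => hCge y (σ.val.iseqv.trans hu hy)
  -- q u = p v
  have hqupv : q u = p v := by
    by_cases hbe : ∃ b0, σ.val j b0 ∧ m < b0
    · obtain ⟨b', ⟨hb'B, hb'm⟩, hb'min0⟩ := myExistsMin {z | σ.val j z ∧ m < z} hbe
      have hb'min : ∀ z, σ.val j z → m < z → b' ≤ z := fun z h1 h2 => hb'min0 z ⟨h1, h2⟩
      have hpv : p v = b' := by
        refine pi_next hp (σ.val.iseqv.trans (σ.val.iseqv.symm hvB) hb'B) (lt_trans hvm hb'm) ?_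
        intro y hy hvy
        have hjy : σ.val j y := σ.val.iseqv.trans hvB hy
        rcases lt_trichotomy y m with h1 | h1 | h1
        · exact absurd (hvmax y hjy h1) (not_le.2 hvy)
        · exact absurd (by rw [h1] at hjy; exact hjy) hm1
        · exact hb'min y hjy h1
      have hqu : q u = b' := by
        refine pi_next hq ((hτr u b').2 (Or.inr ⟨Or.inr hu, Or.inl hb'B⟩))
          (hCltB u b' hu hb'B hb'm) ?_
        intro y hy huy
        rcases (hτr u y).1 hy with hσuy | ⟨_, hyD⟩
        · exact absurd (humax y (σ.val.iseqv.trans hu hσuy)) (not_le.2 huy)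
        · rcases hyD with hy' | hy'
          · rcases lt_trichotomy y m with h1 | h1 | h1
            · exact absurd (lt_trans (lt_of_lt_of_le h1 hmleu) huy) (lt_irrefl y)
            · exact absurd (by rw [h1] at hy'; exact hy') hm1
            · exact hb'min y hy' h1
          · exact absurd (humax y hy') (not_le.2 huy)
      rw [hqu, hpv]
    · push_neg at hbe
      have hBltm : ∀ b0, σ.val j b0 → b0 < m := fun b0 hb =>
        lt_of_le_of_ne (hbe b0 hb) (fun e => hm1 (by rw [← e]; exact hb))
      have hpv : p v = j := by
        refine pi_wrap hp (σ.val.iseqv.symm hvB) ?_ ?_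
        · intro y hy
          have hjy : σ.val j y := σ.val.iseqv.trans hvB hy
          exact hvmax y hjy (hBltm y hjy)
        · exact fun y hy => hBge y (σ.val.iseqv.trans hvB hy)
      have hqu : q u = j := by
        refine pi_wrap hq ((hτr u j).2 (Or.inr ⟨Or.inr hu, Or.inl (σ.val.iseqv.refl j)⟩)) ?_ ?_
        · intro y hy
          rcases (hτr u y).1 hy with hσuy | ⟨_, hyD⟩
          · exact humax y (σ.val.iseqv.trans hu hσuy)
          · rcases hyD with hy' | hy'
            · exact le_trans (le_of_lt (hBltm y hy')) hmleu
            · exact humax y hy'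
        · intro y hy
          rcases (hτr u y).1 hy with hσuy | ⟨_, hyD⟩
          · exact le_of_lt (lt_of_lt_of_le hjltm (hCge y (σ.val.iseqv.trans hu hσuy)))
          · rcases hyD with hy' | hy'
            · exact hBge y hy'
            · exact le_of_lt (lt_of_lt_of_le hjltm (hCge y hy'))
      rw [hqu, hpv]
  -- q x = p x away from u and v
  have hfix : ∀ x, x ≠ u → x ≠ v → q x = p x := by
    intro x hxu hxv
    by_cases hxD : σ.val j x ∨ σ.val m x
    · rcases hxD with hx | hx
      · -- x in the block of j
        rcases lt_trichotomy x m with hxm | hxm | hxm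
        · -- x < m, so x < v
          have hxv' : x < v := lt_of_le_of_ne (hvmax x hx hxm) hxv
          have hσxv : σ.val x v := σ.val.iseqv.trans (σ.val.iseqv.symm hx) hvB
          obtain ⟨hxlt, hpmin⟩ := (hp x).2.1 ⟨v, hσxv, hxv'⟩
          have hpxv : p x ≤ v := hpmin v hσxv hxv'
          refine pi_next hq ((hτr x (p x)).2 (Or.inl (hp x).1)) hxlt ?_
          intro y hy hxy
          rcases (hτr x y).1 hy with hσxy | ⟨_, hyD⟩
          · exact hpmin y hσxy hxy
          · rcases hyD with hy' | hy'
            · exact hpmin y (σ.val.iseqv.trans (σ.val.iseqv.symm hx) hy') hxy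
            · exact le_trans (le_trans hpxv (le_of_lt hvm)) (hCge y hy')
        · exact absurd (by rw [hxm] at hx; exact hx) hm1
        · -- m < x
          by_cases hex2 : ∃ y, σ.val x y ∧ x < y
          · obtain ⟨hxlt, hpmin⟩ := (hp x).2.1 hex2
            refine pi_next hq ((hτr x (p x)).2 (Or.inl (hp x).1)) hxlt ?_
            intro y hy hxy
            rcases (hτr x y).1 hy with hσxy | ⟨_, hyD⟩
            · exact hpmin y hσxy hxy
            · rcases hyD with hy' | hy'
              · exact hpmin y (σ.val.iseqv.trans (σ.val.iseqv.symm hx) hy') hxy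
              · exact absurd (hCltB y x hy' hx hxm) (not_lt.2 (le_of_lt hxy))
          · push_neg at hex2
            have htop : ∀ y, σ.val x y → y ≤ x := hex2
            have hpx : p x = j := pi_wrap hp (σ.val.iseqv.symm hx) htop
              (fun y hy => hBge y (σ.val.iseqv.trans hx hy))
            have hqx : q x = j := by
              refine pi_wrap hq ((hτr x j).2 (Or.inr ⟨Or.inl hx, Or.inl (σ.val.iseqv.refl j)⟩)) ?_ ?_
              · intro y hy
                rcases (hτr x y).1 hy with hσxy | ⟨_, hyD⟩
                · exact htop y hσxy
                · rcases hyD with hy' | hy'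
                  · exact htop y (σ.val.iseqv.trans (σ.val.iseqv.symm hx) hy')
                  · exact le_of_lt (hCltB y x hy' hx hxm)
              · intro y hy
                rcases (hτr x y).1 hy with hσxy | ⟨_, hyD⟩
                · exact hBge y (σ.val.iseqv.trans hx hσxy)
                · rcases hyD with hy' | hy'
                  · exact hBge y hy'
                  · exact le_of_lt (lt_of_lt_of_le hjltm (hCge y hy'))
            rw [hpx, hqx]
      · -- x in the block of m, x ≠ u hence x < u
        have hxu' : x < u := lt_of_le_of_ne (humax x hx) hxu
        have hσxu : σ.val x u := σ.val.iseqv.trans (σ.val.iseqv.symm hx) hu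
        obtain ⟨hxlt, hpmin⟩ := (hp x).2.1 ⟨u, hσxu, hxu'⟩
        have hpxC : σ.val m (p x) := σ.val.iseqv.trans hx (hp x).1
        refine pi_next hq ((hτr x (p x)).2 (Or.inl (hp x).1)) hxlt ?_
        intro y hy hxy
        rcases (hτr x y).1 hy with hσxy | ⟨_, hyD⟩
        · exact hpmin y hσxy hxy
        · rcases hyD with hy' | hy'
          · exact le_of_lt (hCltB (p x) y hpxC hy' (lt_of_le_of_lt (hCge x hx) hxy))
          · exact hpmin y (σ.val.iseqv.trans (σ.val.iseqv.symm hx) hy') hxy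
    · -- x outside both blocks : classes agree
      refine (pi_apply_eq hp hq x (fun y => ⟨fun hh => (hτr x y).2 (Or.inl hh), fun hh => ?_⟩)).symm
      rcases (hτr x y).1 hh with h' | ⟨hxD', _⟩
      · exact h'
      · exact absurd hxD' hxD
  -- assemble the swap
  have key : ∀ x, q x = p (Equiv.swap v u x) := by
    intro x
    by_cases h1 : x = v
    · subst h1
      rw [Equiv.swap_apply_left, hqv, hpu]
    · by_cases h2 : x = u
      · subst h2
        rw [Equiv.swap_apply_right, hqupv]
      · rw [Equiv.swap_apply_of_ne_of_ne h1 h2]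
        exact hfix x h2 h1
  refine ⟨v, u, ne_of_lt hvltu, ?_⟩
  ext x
  rw [Equiv.Perm.mul_apply, key x, Equiv.Perm.inv_def, Equiv.symm_apply_apply]

end cover

/-- If `τ` covers `σ` in `NC_n` then the label `π(σ)⁻¹ π(τ)` is a transposition;
consequently, for any saturated chain `σ = c 0 ⋖ c 1 ⋖ ⋯ ⋖ c k = τ` in `NC_n`,
each label `π(c (i-1))⁻¹ π(c i)` is a transposition and the ordered product of the
labels equals `π(σ)⁻¹ π(τ)`. -/
theorem NC_cover_labels (n : ℕ)
    (π : NC n → Equiv.Perm (Fin n)) (hπ : ∀ σ : NC n, IsPiPerm σ.val (π σ)) :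
    (∀ σ τ : NC n, σ ⋖ τ → ((π σ)⁻¹ * π τ).IsSwap) ∧
    ∀ (k : ℕ) (c : ℕ → NC n), (∀ i < k, c i ⋖ c (i + 1)) →
      (∀ i < k, ((π (c i))⁻¹ * π (c (i + 1))).IsSwap) ∧
      ((List.range k).map fun i => (π (c i))⁻¹ * π (c (i + 1))).prod
        = (π (c 0))⁻¹ * π (c k) := by
  have hswap : ∀ σ τ : NC n, σ ⋖ τ → ((π σ)⁻¹ * π τ).IsSwap :=
    fun σ τ h => cover_swap σ τ h (π σ) (π τ) (hπ σ) (hπ τ)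
  refine ⟨hswap, ?_⟩
  intro k
  induction k with
  | zero =>
    intro c _
    refine ⟨fun i hi => absurd hi (Nat.not_lt_zero i), ?_⟩
    simp
  | succ k ih =>
    intro c hc
    obtain ⟨_, hprod⟩ := ih c (fun i hi => hc i (Nat.lt_succ_of_lt hi))
    refine ⟨fun i hi => hswap _ _ (hc i hi), ?_⟩
    rw [List.range_succ, List.map_append, List.prod_append, hprod]
    simp [mul_assoc]
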